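/- If N = (p_1 p_2 ⋯ p_t)^{2a} = m^2 is a quasiperfect number (where p_1, ..., p_t are distinct primes and a is a positive integer), then N is not divisible by 3 and σ(N) = 2m^2 + 1 is divisible by 3. -/

import Mathlib

open Finset ArithmeticFunction
open scoped ArithmeticFunction.sigma Function

/-- A positive integer `N` is quasiperfect if `σ(N) = 2N + 1`. -/
def Quasiperfect (N : ℕ) : Prop :=
  0 < N ∧ ArithmeticFunction.sigma 1 N = 2 * N + 1

/-- Any divisor of `2 m² + 1` is `≡ 1, 3 mod 8`, since `-2` is a square mod it. -/
lemma aux_L1 (D m : ℕ) (hD : D ∣ 2 * m ^ 2 + 1) (h8 : D % 8 = 5 ∨ D % 8 = 7) : False := by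
  have hodd : Odd D := Nat.odd_iff.mpr (by omega)
  have h0 : ((2 * m ^ 2 + 1 : ℕ) : ZMod D) = 0 :=
    (ZMod.natCast_eq_zero_iff _ _).mpr hD
  have hsq : IsSquare ((-2 : ℤ) : ZMod D) := by
    refine ⟨((2 * m : ℕ) : ZMod D), ?_⟩
    push_cast at h0 ⊢
    linear_combination (-2 : ZMod D) * h0
  have hj : jacobiSym (-2) D = -1 := by
    rw [jacobiSym.at_neg_two hodd]
    have : (D : ZMod 8) = ((D % 8 : ℕ) : ZMod 8) := (ZMod.natCast_mod D 8).symm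
    rcases h8 with h | h <;> rw [show (ZMod.χ₈' D) = ZMod.χ₈' ((D % 8 : ℕ) : ZMod 8) by rw [ZMod.natCast_mod]] <;>
      rw [h] <;> decide
  exact ZMod.nonsquare_of_jacobiSym_eq_neg_one hj hsq

lemma aux_sigma_pp (p k : ℕ) (hp : p.Prime) :
    σ 1 (p ^ k) = ∑ i ∈ Finset.range (k + 1), p ^ i := by
  rw [sigma_one_apply, Nat.sum_divisors_prime_pow hp]

lemma aux_geo (q : ZMod 8) (hq : q * q = 1) (a : ℕ) :
    ∑ i ∈ Finset.range (2 * a + 1), q ^ i = ((a : ZMod 8) + 1) + (a : ZMod 8) * q := by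
  induction a with
  | zero => simp
  | succ n ih =>
    have h2 : 2 * (n + 1) + 1 = (2 * n + 1) + 1 + 1 := by ring
    have hq2 : q ^ (2 * n) = 1 := by
      rw [pow_mul, pow_two, hq, one_pow]
    rw [h2, Finset.sum_range_succ, Finset.sum_range_succ, ih]
    have e1 : q ^ (2 * n + 1) = q := by rw [pow_succ, hq2, one_mul]
    have e2 : q ^ (2 * n + 1 + 1) = 1 := by rw [pow_succ, e1, hq]
    rw [e1, e2]
    push_cast
    ring

lemma aux_two_pow (n : ℕ) : ∑ i ∈ Finset.range n, 2 ^ i = 2 ^ n - 1 := by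
  induction n with
  | zero => simp
  | succ k ih =>
    rw [Finset.sum_range_succ, ih, pow_succ]
    have : 1 ≤ 2 ^ k := Nat.one_le_two_pow
    omega

lemma aux_odd_sq (n : ℕ) (hn : n % 2 = 1) : (n : ZMod 8) * (n : ZMod 8) = 1 := by
  have h8 : n % 8 = 1 ∨ n % 8 = 3 ∨ n % 8 = 5 ∨ n % 8 = 7 := by omega
  rw [show (n : ZMod 8) = ((n % 8 : ℕ) : ZMod 8) from (ZMod.natCast_mod n 8).symm]
  rcases h8 with h | h | h | h <;> rw [h] <;> decide

theorem stmt_7 (t : ℕ) (p : Fin t → ℕ) (a N m : ℕ)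
    (hp : ∀ i, (p i).Prime) (hinj : Function.Injective p)
    (ha : 0 < a)
    (hN : N = (∏ i, p i) ^ (2 * a)) (hm : N = m ^ 2)
    (hq : Quasiperfect N) :
    ¬ (3 ∣ N) ∧ ArithmeticFunction.sigma 1 N = 2 * m ^ 2 + 1 ∧
      3 ∣ 2 * m ^ 2 + 1 := by
  obtain ⟨hNpos, hsig⟩ := hq
  have hσ : σ 1 N = 2 * m ^ 2 + 1 := by rw [hsig, hm]
  have hNprod : N = ∏ i, (p i) ^ (2 * a) := by rw [hN, Finset.prod_pow]
  have hcop : ((Finset.univ : Finset (Fin t)) : Set (Fin t)).Pairwise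
      (Nat.Coprime on fun i => p i ^ (2 * a)) := by
    intro i _ j _ hij
    exact Nat.Coprime.pow _ _ ((Nat.coprime_primes (hp i) (hp j)).mpr fun h => hij (hinj h))
  have hfac : σ 1 N = ∏ i, σ 1 ((p i) ^ (2 * a)) := by
    rw [hNprod]
    exact isMultiplicative_sigma.map_prod _ _ hcop
  have hdvd : ∀ i, σ 1 ((p i) ^ (2 * a)) ∣ 2 * m ^ 2 + 1 := by
    intro i
    rw [← hσ, hfac]
    exact Finset.dvd_prod_of_mem _ (Finset.mem_univ i)
  have hpdvdN : ∀ i, p i ∣ N := by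
    intro i
    rw [hNprod]
    exact dvd_trans (dvd_pow_self (p i) (by omega)) (Finset.dvd_prod_of_mem _ (Finset.mem_univ i))
  -- N is odd
  have hNodd : ¬ 2 ∣ N := by
    intro h2
    obtain ⟨i, _, hi⟩ : ∃ i ∈ Finset.univ, (2 : ℕ) ∣ p i ^ (2 * a) := by
      refine Nat.prime_two.prime.exists_mem_finset_dvd ?_
      rwa [← hNprod]
    have hpi2 : p i = 2 := ((Nat.prime_dvd_prime_iff_eq Nat.prime_two (hp i)).mp
      (Nat.prime_two.dvd_of_dvd_pow hi)).symm
    have hs : σ 1 (p i ^ (2 * a)) = 2 ^ (2 * a + 1) - 1 := by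
      rw [aux_sigma_pp _ _ (hp i), hpi2, aux_two_pow]
    apply aux_L1 _ m (hdvd i)
    right
    rw [hs]
    have h8 : (8 : ℕ) ∣ 2 ^ (2 * a + 1) := by
      have : 2 * a + 1 = 3 + (2 * a - 2) := by omega
      rw [this, pow_add]
      exact Dvd.intro _ rfl
    obtain ⟨c, hc⟩ := h8
    have : 1 ≤ 2 ^ (2 * a + 1) := Nat.one_le_two_pow
    omega
  have hmodd : m % 2 = 1 := by
    rcases Nat.even_or_odd m with he | ho
    · exact absurd (by rw [hm, sq]; exact Dvd.dvd.mul_right he.two_dvd m) hNodd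
    · exact Nat.odd_iff.mp ho
  -- σ(N) ≡ 3 mod 8
  have hσ8 : ((σ 1 N : ℕ) : ZMod 8) = 3 := by
    rw [hσ]
    push_cast
    have := aux_odd_sq m hmodd
    linear_combination (2 : ZMod 8) * this
  -- each p i is odd
  have hpodd : ∀ i, p i % 2 = 1 := by
    intro i
    by_contra h
    have h2 : 2 ∣ p i := by omega
    exact hNodd (dvd_trans h2 (hpdvdN i))
  -- a is odd
  have haodd : a % 2 = 1 := by
    by_contra hae
    have hae' : a % 2 = 0 := by omega
    obtain ⟨c, hc⟩ : ∃ c, a = 2 * c := ⟨a / 2, by omega⟩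
    have hfac8 : ∀ i, ((σ 1 ((p i) ^ (2 * a)) : ℕ) : ZMod 8) = 1 ∨
        ((σ 1 ((p i) ^ (2 * a)) : ℕ) : ZMod 8) = 5 := by
      intro i
      have hps : (p i : ZMod 8) * (p i : ZMod 8) = 1 := aux_odd_sq _ (hpodd i)
      have : ((σ 1 ((p i) ^ (2 * a)) : ℕ) : ZMod 8)
          = ((a : ZMod 8) + 1) + (a : ZMod 8) * (p i : ZMod 8) := by
        rw [aux_sigma_pp _ _ (hp i)]
        push_cast
        exact aux_geo _ hps a
      rw [this, hc]
      push_cast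
      revert hps
      generalize (p i : ZMod 8) = q
      generalize (c : ZMod 8) = e
      revert q e
      decide
    have hprod : ((σ 1 N : ℕ) : ZMod 8) = 1 ∨ ((σ 1 N : ℕ) : ZMod 8) = 5 := by
      rw [hfac, Nat.cast_prod]
      refine Finset.prod_induction _ (fun x => x = 1 ∨ x = 5) ?_ (Or.inl rfl) ?_
      · rintro x y (hx | hx) (hy | hy) <;> rw [hx, hy] <;> decide
      · intro i _
        exact hfac8 i
    rw [hσ8] at hprod
    rcases hprod with h | h <;> exact absurd h (by decide)
  -- 3 does not divide N
  have h3 : ¬ 3 ∣ N := by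
    intro h3N
    obtain ⟨i, _, hi⟩ : ∃ i ∈ Finset.univ, (3 : ℕ) ∣ p i ^ (2 * a) := by
      refine Nat.prime_three.prime.exists_mem_finset_dvd ?_
      rwa [← hNprod]
    have hpi3 : p i = 3 := ((Nat.prime_dvd_prime_iff_eq Nat.prime_three (hp i)).mp
      (Nat.prime_three.dvd_of_dvd_pow hi)).symm
    have hD8 : ((σ 1 ((p i) ^ (2 * a)) : ℕ) : ZMod 8) = 5 := by
      rw [aux_sigma_pp _ _ (hp i), hpi3]
      push_cast
      rw [aux_geo 3 (by decide) a]
      have h4a : (4 : ZMod 8) * (a : ZMod 8) = 4 := by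
        rw [show (a : ZMod 8) = ((a % 8 : ℕ) : ZMod 8) from (ZMod.natCast_mod a 8).symm]
        have : a % 8 = 1 ∨ a % 8 = 3 ∨ a % 8 = 5 ∨ a % 8 = 7 := by omega
        rcases this with h | h | h | h <;> rw [h] <;> decide
      linear_combination h4a
    apply aux_L1 _ m (hdvd i)
    left
    have : (σ 1 ((p i) ^ (2 * a))) % 8 = (5 : ZMod 8).val := by
      rw [← hD8, ZMod.val_natCast]
    simpa [show (5 : ZMod 8).val = 5 from rfl] using this
  refine ⟨h3, hσ, ?_⟩
  -- 3 ∣ 2 m² + 1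
  have h3m : ¬ (3 : ℕ) ∣ m := by
    intro hdm
    exact h3 (hm ▸ (by rw [sq]; exact hdm.mul_right m))
  rw [← ZMod.natCast_eq_zero_iff]
  have hm3 : (m : ZMod 3) = 1 ∨ (m : ZMod 3) = 2 := by
    have : m % 3 = 1 ∨ m % 3 = 2 := by
      have : ¬ m % 3 = 0 := fun h => h3m (Nat.dvd_of_mod_eq_zero h)
      omega
    rw [show (m : ZMod 3) = ((m % 3 : ℕ) : ZMod 3) from (ZMod.natCast_mod m 3).symm]
    rcases this with h | h <;> rw [h] <;> [left; right] <;> decide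
  push_cast
  rcases hm3 with h | h <;> rw [h] <;> decide
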